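/- If cantor(ℕ^ℕ) holds (every nonmeager subset of Baire space has nonmeager intersection with some nowhere dense Cantor set, relative to that Cantor set), then cantor(X) holds for every perfect Polish space X. -/

import Mathlib

open Set Topology Filter

def PerfectProp (X : Type*) [TopologicalSpace X] : Prop :=
  ∀ A : Set X, ¬ IsMeagre A →
    ∃ P : Set X, IsNowhereDense P ∧ Perfect P ∧ P.Nonempty ∧
      ¬ IsMeagre ((↑) ⁻¹' A : Set P)

def CantorProp (X : Type*) [TopologicalSpace X] : Prop :=
  ∀ A : Set X, ¬ IsMeagre A →
    ∃ C : Set X, IsNowhereDense C ∧ Nonempty (C ≃ₜ (ℕ → Bool)) ∧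
      ¬ IsMeagre ((↑) ⁻¹' A : Set C)

/-! ### Auxiliary meagreness transfer lemmas -/

section Transfer

variable {α β : Type*} [TopologicalSpace α] [TopologicalSpace β]

lemma aux_homeo_nwd (e : α ≃ₜ β) {s : Set α} (h : IsNowhereDense s) :
    IsNowhereDense (e '' s) := by
  rw [IsNowhereDense, ← e.image_closure, ← e.image_interior, h, image_empty]

lemma aux_homeo_meagre (e : α ≃ₜ β) {s : Set α} (h : IsMeagre s) : IsMeagre (e '' s) := by
  rw [isMeagre_iff_countable_union_isNowhereDense] at h ⊢
  obtain ⟨S, hS1, hS2, hS3⟩ := h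
  refine ⟨(fun t => e '' t) '' S, ?_, hS2.image _, ?_⟩
  · rintro t ⟨u, hu, rfl⟩; exact aux_homeo_nwd e (hS1 u hu)
  · rintro y ⟨x, hx, rfl⟩
    obtain ⟨t, ht, hxt⟩ := hS3 hx
    exact ⟨e '' t, ⟨t, ht, rfl⟩, ⟨x, hxt, rfl⟩⟩

lemma aux_homeo_meagre_preimage (e : α ≃ₜ β) {t : Set β} (h : IsMeagre t) :
    IsMeagre (e ⁻¹' t) := by
  have heq : e ⁻¹' t = e.symm '' t := by
    ext z
    constructor
    · intro hz; exact ⟨e z, hz, e.symm_apply_apply z⟩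
    · rintro ⟨x, hx, rfl⟩; simpa using hx
  rw [heq]
  exact aux_homeo_meagre e.symm h

lemma aux_union_meagre {s t : Set α} (hs : IsMeagre s) (ht : IsMeagre t) :
    IsMeagre (s ∪ t) := by
  rw [IsMeagre, compl_union]
  exact Filter.inter_mem hs ht

lemma aux_subtype_nwd {G : Set α} (hG : Dense G) {N : Set G} (h : IsNowhereDense N) :
    IsNowhereDense ((↑) '' N : Set α) := by
  rw [IsNowhereDense, eq_empty_iff_forall_notMem]
  intro x hx
  obtain ⟨u, huI, huG⟩ := hG.inter_open_nonempty _ isOpen_interior ⟨x, hx⟩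
  have hmem : (⟨u, huG⟩ : G) ∈ interior (closure N) := by
    rw [mem_interior]
    refine ⟨(Subtype.val ⁻¹' interior (closure (Subtype.val '' N)) : Set G), ?_, ?_, huI⟩
    · intro z hz
      rw [closure_subtype]
      exact interior_subset hz
    · exact isOpen_interior.preimage continuous_subtype_val
  rw [h] at hmem
  exact hmem

lemma aux_subtype_meagre {G : Set α} (hG : Dense G) {t : Set G} (h : IsMeagre t) :
    IsMeagre ((↑) '' t : Set α) := by
  rw [isMeagre_iff_countable_union_isNowhereDense] at h ⊢
  obtain ⟨S, hS1, hS2, hS3⟩ := h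
  refine ⟨(fun u => (↑) '' u : Set G → Set α) '' S, ?_, hS2.image _, ?_⟩
  · rintro u ⟨v, hv, rfl⟩; exact aux_subtype_nwd hG (hS1 v hv)
  · rintro y ⟨x, hx, rfl⟩
    obtain ⟨u, hu, hxu⟩ := hS3 hx
    exact ⟨(↑) '' u, ⟨u, hu, rfl⟩, ⟨x, hxu, rfl⟩⟩

end Transfer

/-! ### The step construction -/

lemma aux_exists_next {X : Type*} [MetricSpace X]
    (hacc : ∀ W : Set X, IsOpen W → ∀ t ∈ W, ∃ y ∈ W, y ≠ t)
    {U F : Set X} (hU : IsOpen U) (hF : IsClosed F) (hne : (U \ F).Nonempty)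
    (d : X) {ε : ℝ} (hε : 0 < ε) :
    ∃ (V : Set X) (y : X), IsOpen V ∧ V.Nonempty ∧ closure V ⊆ U \ F ∧
      EMetric.diam V ≤ ENNReal.ofReal ε ∧ y ∈ (U \ F) \ closure V ∧
      (d ∈ U \ F → d ∈ V) := by
  set W := U \ F with hWdef
  have hWopen : IsOpen W := hU.sdiff hF
  obtain ⟨t, htW, htd⟩ : ∃ t, t ∈ W ∧ (d ∈ W → d = t) := by
    by_cases hd : d ∈ W
    · exact ⟨d, hd, fun _ => rfl⟩
    · exact ⟨hne.some, hne.some_mem, fun hd' => absurd hd' hd⟩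
  obtain ⟨y, hyW, hyt⟩ := hacc W hWopen t htW
  obtain ⟨r0, hr0pos, hball⟩ := Metric.isOpen_iff.mp hWopen t htW
  have hdyt : 0 < dist y t := dist_pos.mpr hyt
  set r := min (min (r0 / 2) (ε / 2)) (dist y t / 2) with hr
  have hrpos : 0 < r := by positivity
  have hrr0 : r < r0 := lt_of_le_of_lt (le_trans (min_le_left _ _) (min_le_left _ _)) (by linarith)
  have hrε : r ≤ ε / 2 := le_trans (min_le_left _ _) (min_le_right _ _)
  have hry : r < dist y t := lt_of_le_of_lt (min_le_right _ _) (by linarith)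
  refine ⟨Metric.ball t r, y, Metric.isOpen_ball, ⟨t, Metric.mem_ball_self hrpos⟩, ?_, ?_, ?_, ?_⟩
  · calc closure (Metric.ball t r) ⊆ Metric.closedBall t r := Metric.closure_ball_subset_closedBall
    _ ⊆ Metric.ball t r0 := Metric.closedBall_subset_ball hrr0
    _ ⊆ W := hball
  · refine EMetric.diam_le fun a ha b hb => ?_
    rw [edist_dist]
    refine ENNReal.ofReal_le_ofReal ?_
    rw [Metric.mem_ball] at ha hb
    have := dist_triangle a t b
    rw [dist_comm t b] at this
    linarith
  · refine ⟨hyW, fun hy' => ?_⟩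
    have h1 : y ∈ Metric.closedBall t r := Metric.closure_ball_subset_closedBall hy'
    rw [Metric.mem_closedBall] at h1
    linarith
  · intro hd
    rw [htd hd]
    exact Metric.mem_ball_self hrpos

/-! ### Children of an open set -/

lemma aux_exists_children {X : Type*} [MetricSpace X] [SecondCountableTopology X]
    (hacc : ∀ W : Set X, IsOpen W → ∀ t ∈ W, ∃ y ∈ W, y ≠ t)
    (U : Set X) (hU : IsOpen U) (hUne : U.Nonempty) (ε : ℝ) (hε : 0 < ε) :
    ∃ V : ℕ → Set X, (∀ n, IsOpen (V n)) ∧ (∀ n, (V n).Nonempty) ∧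
      (∀ n, closure (V n) ⊆ U) ∧ (∀ n, EMetric.diam (V n) ≤ ENNReal.ofReal ε) ∧
      (∀ m n, m ≠ n → Disjoint (closure (V m)) (closure (V n))) ∧
      U ⊆ closure (⋃ n, V n) := by
  have hXne : Nonempty X := ⟨hUne.some⟩
  obtain ⟨d, hd⟩ := TopologicalSpace.exists_dense_seq X
  choose Vf yf h1 h2 h3 h4 h5 h6 using
    fun (F : Set X) (hF : IsClosed F) (hne : (U \ F).Nonempty) (n : ℕ) =>
      aux_exists_next hacc hU hF hne (d n) hε
  let g : ℕ → {q : Set X × X // IsClosed q.1 ∧ q.2 ∈ U \ q.1} := fun n =>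
    Nat.rec ⟨(∅, hUne.some), isClosed_empty, by simpa using hUne.some_mem⟩
      (fun n ih =>
        ⟨(ih.1.1 ∪ closure (Vf ih.1.1 ih.2.1 ⟨ih.1.2, ih.2.2⟩ n),
          yf ih.1.1 ih.2.1 ⟨ih.1.2, ih.2.2⟩ n),
         ih.2.1.union isClosed_closure, by
          have hy := h5 ih.1.1 ih.2.1 ⟨ih.1.2, ih.2.2⟩ n
          exact ⟨hy.1.1, fun hc => hc.elim hy.1.2 hy.2⟩⟩) n
  let F : ℕ → Set X := fun n => (g n).1.1
  let V : ℕ → Set X := fun n => Vf (F n) (g n).2.1 ⟨(g n).1.2, (g n).2.2⟩ n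
  have hF0 : F 0 = ∅ := rfl
  have hFsucc : ∀ n, F (n + 1) = F n ∪ closure (V n) := fun n => rfl
  have hFclosed : ∀ n, IsClosed (F n) := fun n => (g n).2.1
  have hVopen : ∀ n, IsOpen (V n) := fun n => h1 _ _ _ n
  have hVne : ∀ n, (V n).Nonempty := fun n => h2 _ _ _ n
  have hVsub : ∀ n, closure (V n) ⊆ U \ F n := fun n => h3 _ _ _ n
  have hVdiam : ∀ n, EMetric.diam (V n) ≤ ENNReal.ofReal ε := fun n => h4 _ _ _ n
  have hVd : ∀ n, d n ∈ U \ F n → d n ∈ V n := fun n => h6 _ _ _ n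
  have hFmono : ∀ m n, m ≤ n → F m ⊆ F n := by
    intro m n hmn
    induction n, hmn using Nat.le_induction with
    | base => exact subset_rfl
    | succ n hmn ih => exact ih.trans (by rw [hFsucc]; exact subset_union_left)
  have hVF : ∀ m n, m < n → closure (V m) ⊆ F n := by
    intro m n hmn
    have h1' : closure (V m) ⊆ F (m + 1) := by rw [hFsucc]; exact subset_union_right
    exact h1'.trans (hFmono _ _ hmn)
  refine ⟨V, hVopen, hVne, fun n => (hVsub n).trans diff_subset, hVdiam, ?_, ?_⟩
  · have key : ∀ m n, m < n → Disjoint (closure (V m)) (closure (V n)) := by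
      intro m n hmn
      rw [Set.disjoint_left]
      intro x hxm hxn
      exact (hVsub n hxn).2 (hVF m n hmn hxm)
    intro m n hmn
    rcases lt_or_gt_of_ne hmn with h | h
    · exact key m n h
    · exact (key n m h).symm
  · have hFU : ∀ n, F n ⊆ ⋃ k, closure (V k) := by
      intro n
      induction n with
      | zero => rw [hF0]; exact empty_subset _
      | succ n ih =>
        rw [hFsucc]
        exact union_subset ih (subset_iUnion (fun k => closure (V k)) n)
    intro u hu
    rw [Metric.mem_closure_iff]
    intro δ hδ
    obtain ⟨r', hr'pos, hball⟩ := Metric.isOpen_iff.mp hU u hu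
    have hpos : 0 < min δ r' / 2 := by positivity
    obtain ⟨n, hn⟩ := hd.exists_dist_lt u hpos
    have hdU : d n ∈ U := by
      apply hball
      rw [Metric.mem_ball, dist_comm]
      calc dist u (d n) < min δ r' / 2 := hn
        _ ≤ r' := by
          have := min_le_right δ r'
          linarith
    by_cases hdF : d n ∈ F n
    · obtain ⟨k, hk⟩ := mem_iUnion.mp (hFU n hdF)
      obtain ⟨v, hv, hdv⟩ := Metric.mem_closure_iff.mp hk _ hpos
      refine ⟨v, mem_iUnion.mpr ⟨k, hv⟩, ?_⟩
      calc dist u v ≤ dist u (d n) + dist (d n) v := dist_triangle _ _ _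
        _ < min δ r' / 2 + min δ r' / 2 := by linarith
        _ ≤ δ := by
          have := min_le_left δ r'
          linarith
    · refine ⟨d n, mem_iUnion.mpr ⟨n, hVd n ⟨hdU, hdF⟩⟩, ?_⟩
      calc dist u (d n) < min δ r' / 2 := hn
        _ ≤ δ := by have := min_le_left δ r'; linarith

theorem stmt_11 (h : CantorProp (ℕ → ℕ)) (X : Type*) [TopologicalSpace X]
    [PolishSpace X] [Nonempty X] (hperf : Preperfect (Set.univ : Set X)) :
    CantorProp X := by
  letI := TopologicalSpace.upgradeIsCompletelyMetrizable X
  have hacc : ∀ W : Set X, IsOpen W → ∀ t ∈ W, ∃ y ∈ W, y ≠ t := by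
    intro W hW t ht
    have h1 := hperf t (mem_univ t)
    rw [accPt_iff_nhds] at h1
    obtain ⟨y, hy, hyt⟩ := h1 W (hW.mem_nhds ht)
    exact ⟨y, hy.1, hyt⟩
  choose Vc hc1 hc2 hc3 hc4 hc5 hc6 using aux_exists_children hacc
  have hhalf : ∀ k : ℕ, (0 : ℝ) < (1 / 2) ^ k := fun k => by positivity
  let A : List ℕ → {p : Set X // IsOpen p ∧ p.Nonempty} := fun l =>
    List.rec ⟨univ, isOpen_univ, univ_nonempty⟩
      (fun a l ih => ⟨Vc ih.1 ih.2.1 ih.2.2 ((1 / 2) ^ (l.length + 1)) (hhalf _) a,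
        hc1 ih.1 ih.2.1 ih.2.2 _ (hhalf _) a, hc2 ih.1 ih.2.1 ih.2.2 _ (hhalf _) a⟩) l
  let s : List ℕ → Set X := fun l => (A l).1
  have hsopen : ∀ l, IsOpen (s l) := fun l => (A l).2.1
  have hsne : ∀ l, (s l).Nonempty := fun l => (A l).2.2
  have hA : ∀ (a : ℕ) (l : List ℕ),
      s (a :: l) = Vc (s l) (A l).2.1 (A l).2.2 ((1 / 2) ^ (l.length + 1)) (hhalf _) a :=
    fun a l => rfl
  have hclos : ∀ (l : List ℕ) (a : ℕ), closure (s (a :: l)) ⊆ s l := by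
    intro l a
    rw [hA]
    exact hc3 _ _ _ _ _ a
  have hdisj : ∀ (l : List ℕ) (a b : ℕ), a ≠ b →
      Disjoint (closure (s (a :: l))) (closure (s (b :: l))) := by
    intro l a b hab
    rw [hA, hA]
    exact hc5 _ _ _ _ _ a b hab
  have hdiam : ∀ (l : List ℕ) (a : ℕ),
      EMetric.diam (s (a :: l)) ≤ ENNReal.ofReal ((1 / 2) ^ (l.length + 1)) := by
    intro l a
    rw [hA]
    exact hc4 _ _ _ _ _ a
  have hdense : ∀ l : List ℕ, s l ⊆ closure (⋃ a, s (a :: l)) := by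
    intro l
    have := hc6 (s l) (A l).2.1 (A l).2.2 ((1 / 2) ^ (l.length + 1)) (hhalf _)
    refine this.trans (closure_mono ?_)
    exact iUnion_mono fun a => by rw [hA]
  -- Cantor scheme properties
  have hanti : CantorScheme.ClosureAntitone s := fun l a => hclos l a
  have hdisjS : CantorScheme.Disjoint s := fun l a b hab =>
    ((hdisj l a b hab).mono subset_closure subset_closure)
  have hvan : CantorScheme.VanishingDiam s := by
    intro x
    have hub : Tendsto (fun n : ℕ => ENNReal.ofReal ((1 / 2 : ℝ) ^ n)) atTop (𝓝 0) := by
      have h0 : Tendsto (fun n : ℕ => ((1 / 2 : ℝ)) ^ n) atTop (𝓝 0) :=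
        tendsto_pow_atTop_nhds_zero_of_lt_one (by norm_num) (by norm_num)
      have := (ENNReal.continuous_ofReal.tendsto 0).comp h0
      simpa [Function.comp_def] using this
    refine tendsto_of_tendsto_of_tendsto_of_le_of_le' tendsto_const_nhds hub
      (Eventually.of_forall fun n => zero_le) ?_
    rw [eventually_atTop]
    refine ⟨1, fun n hn => ?_⟩
    obtain ⟨m, rfl⟩ := Nat.exists_eq_add_of_le hn
    rw [Nat.add_comm, PiNat.res_succ]
    have := hdiam (PiNat.res x m) (x m)
    rwa [PiNat.res_length] at this
  have htot : (CantorScheme.inducedMap s).1 = univ :=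
    CantorScheme.ClosureAntitone.map_of_vanishingDiam hvan hanti hsne
  let f : (ℕ → ℕ) → X := fun x => (CantorScheme.inducedMap s).2 ⟨x, by rw [htot]; trivial⟩
  have hfc : Continuous f :=
    (CantorScheme.VanishingDiam.map_continuous hvan).comp
      (Continuous.subtype_mk continuous_id _)
  have hfinj : Function.Injective f := by
    intro x y hxy
    have := CantorScheme.Disjoint.map_injective hdisjS
      (a₁ := ⟨x, by rw [htot]; trivial⟩) (a₂ := ⟨y, by rw [htot]; trivial⟩) hxy
    exact congrArg Subtype.val this
  have hfmem : ∀ (x : ℕ → ℕ) (n : ℕ), f x ∈ s (PiNat.res x n) :=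
    fun x n => CantorScheme.map_mem _ n
  have funique : ∀ (x : ℕ → ℕ) (u : X), (∀ n, u ∈ s (PiNat.res x n)) → u = f x := by
    intro x u hu
    by_contra hneq
    have hdpos : 0 < dist u (f x) := dist_pos.mpr hneq
    obtain ⟨n, hn⟩ := hvan.dist_lt _ hdpos x
    exact absurd (hn u (hu n) (f x) (hfmem x n)) (lt_irrefl _)
  have huniq : ∀ l m : List ℕ, l.length = m.length → ∀ u, u ∈ s l → u ∈ s m → l = m := by
    intro l
    induction l with
    | nil =>
      intro m hm u _ _
      exact (List.length_eq_zero_iff.mp hm.symm).symm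
    | cons a l ih =>
      intro m hm u hul hum
      cases m with
      | nil => simp at hm
      | cons b m' =>
        have hlen : l.length = m'.length := by simpa using hm
        obtain rfl := ih m' hlen u (hanti.antitone l a hul) (hanti.antitone m' b hum)
        by_cases hab : a = b
        · rw [hab]
        · exact absurd (subset_closure hum)
            (Set.disjoint_left.mp (hdisj l a b hab) (subset_closure hul))
  have hpre : ∀ (l : List ℕ) (x : ℕ → ℕ), f x ∈ s l → PiNat.res x l.length = l :=
    fun l x hx => huniq _ _ (by simp) (f x) (hfmem x l.length) hx
  -- the homeomorphism onto the range
  have hcoe : ⇑(Equiv.ofInjective f hfinj) = fun x => (⟨f x, mem_range_self x⟩ : Set.range f) := by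
    funext x
    exact Subtype.ext rfl
  have hopenmap : IsOpenMap (fun x => (⟨f x, mem_range_self x⟩ : Set.range f)) := by
    intro O hO
    rw [isOpen_iff_forall_mem_open]
    rintro b ⟨x, hxO, rfl⟩
    obtain ⟨t, ⟨x₀, n, rfl⟩, hxt, htO⟩ :=
      (PiNat.isTopologicalBasis_cylinders (fun _ : ℕ => ℕ)).exists_subset_of_mem_open hxO hO
    have hres : PiNat.res x n = PiNat.res x₀ n := by
      rw [PiNat.cylinder_eq_res] at hxt
      exact hxt
    refine ⟨Subtype.val ⁻¹' (s (PiNat.res x n)), ?_, ?_, hfmem x n⟩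
    · rintro ⟨w, z, rfl⟩ hw
      have hz : PiNat.res z n = PiNat.res x n := by
        have := hpre (PiNat.res x n) z hw
        rwa [PiNat.res_length] at this
      refine ⟨z, htO ?_, rfl⟩
      rw [PiNat.cylinder_eq_res]
      show PiNat.res z n = PiNat.res x₀ n
      rw [hz, hres]
    · exact (hsopen _).preimage continuous_subtype_val
  let e : (ℕ → ℕ) ≃ₜ (Set.range f) :=
    Equiv.toHomeomorphOfContinuousOpen (Equiv.ofInjective f hfinj)
      (by rw [hcoe]; exact hfc.subtype_mk _) (by rw [hcoe]; exact hopenmap)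
  -- the range is comeagre
  let D : ℕ → Set X := fun n => ⋃ l ∈ {l : List ℕ | l.length = n}, s l
  have hDopen : ∀ n, IsOpen (D n) := fun n => isOpen_biUnion fun l _ => hsopen l
  have hDdense : ∀ n, Dense (D n) := by
    intro n
    induction n with
    | zero =>
      have hsub : s [] ⊆ D 0 := subset_biUnion_of_mem (show ([] : List ℕ) ∈ _ by simp)
      have : D 0 = univ := eq_univ_of_univ_subset hsub
      rw [this]
      exact dense_univ
    | succ n ih =>
      have hsub : D n ⊆ closure (D (n + 1)) := by
        rintro u hu
        simp only [D, mem_iUnion, mem_setOf_eq] at hu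
        obtain ⟨l, hl, hul⟩ := hu
        refine closure_mono ?_ (hdense l hul)
        rintro v hv
        obtain ⟨a, hva⟩ := mem_iUnion.mp hv
        exact mem_biUnion (show (a :: l).length = n + 1 by simp [hl]) hva
      intro x
      exact closure_minimal hsub isClosed_closure (ih x)
  have hGsub : (⋂ n, D n) ⊆ Set.range f := by
    intro u hu
    rw [mem_iInter] at hu
    have hex : ∀ n, ∃ l : List ℕ, l.length = n ∧ u ∈ s l := by
      intro n
      have := hu n
      simp only [D, mem_iUnion, mem_setOf_eq] at this
      obtain ⟨l, hl, hul⟩ := this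
      exact ⟨l, hl, hul⟩
    choose L hL1 hL2 using hex
    have hcons : ∀ n, L (n + 1) = (L (n + 1)).headI :: L n := by
      intro n
      obtain ⟨a, m, hm⟩ := List.exists_cons_of_ne_nil
        (show L (n + 1) ≠ [] by
          intro hnil
          have := hL1 (n + 1)
          rw [hnil] at this
          simp at this)
      have hmlen : m.length = n := by
        have := hL1 (n + 1)
        rw [hm] at this
        simpa using this
      have hum : u ∈ s m := by
        have := hL2 (n + 1)
        rw [hm] at this
        exact hanti.antitone m a this
      have hmL : m = L n := huniq m (L n) (hmlen.trans (hL1 n).symm) u hum (hL2 n)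
      rw [hm, hmL]
      simp
    set x : ℕ → ℕ := fun n => (L (n + 1)).headI with hxdef
    have hres : ∀ n, PiNat.res x n = L n := by
      intro n
      induction n with
      | zero =>
        rw [PiNat.res_zero]
        exact (List.length_eq_zero_iff.mp (hL1 0)).symm
      | succ n ih =>
        rw [PiNat.res_succ, ih]
        exact (hcons n).symm
    have : ∀ n, u ∈ s (PiNat.res x n) := fun n => by rw [hres n]; exact hL2 n
    exact ⟨x, (funique x u this).symm⟩
  have hGcomeager : IsMeagre (Set.range f)ᶜ := by
    have hsub : (Set.range f)ᶜ ⊆ ⋃ n, (D n)ᶜ := by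
      rw [← compl_iInter]
      exact compl_subset_compl.mpr hGsub
    refine IsMeagre.mono hsub (isMeagre_iUnion fun n => ?_)
    rw [isMeagre_iff_countable_union_isNowhereDense]
    refine ⟨{(D n)ᶜ}, ?_, countable_singleton _, by simp⟩
    rintro t rfl2
    simp only [mem_singleton_iff] at rfl2
    rw [rfl2]
    rw [(hDopen n).isClosed_compl.isNowhereDense_iff]
    rw [interior_eq_empty_iff_dense_compl, compl_compl]
    exact hDdense n
  have hdenseG : Dense (Set.range f) := by
    apply dense_of_mem_residual
    rw [IsMeagre] at hGcomeager
    rwa [compl_compl] at hGcomeager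
  have pushmeager : ∀ t : Set (ℕ → ℕ), IsMeagre t → IsMeagre (f '' t) := by
    intro t ht
    have h1 : IsMeagre (e '' t) := aux_homeo_meagre e ht
    have h2 : IsMeagre ((↑) '' (e '' t) : Set X) := aux_subtype_meagre hdenseG h1
    have h3 : (Subtype.val '' (e '' t) : Set X) = f '' t := by
      rw [← image_comp]
      refine image_congr fun x _ => ?_
      show ((e x : Set.range f) : X) = f x
      rfl
    rwa [h3] at h2
  -- main argument
  intro Aset hAset
  have hA' : ¬ IsMeagre (f ⁻¹' Aset) := by
    intro hm
    apply hAset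
    have h1 : IsMeagre (f '' (f ⁻¹' Aset)) := pushmeager _ hm
    have h2 : Aset ⊆ f '' (f ⁻¹' Aset) ∪ (Set.range f)ᶜ := by
      intro a ha
      by_cases hr : a ∈ Set.range f
      · obtain ⟨x, rfl⟩ := hr
        exact Or.inl ⟨x, ha, rfl⟩
      · exact Or.inr hr
    exact IsMeagre.mono h2 (aux_union_meagre h1 hGcomeager)
  obtain ⟨C', hC'nwd, ⟨eC⟩, hC'nm⟩ := h _ hA'
  have hC'cs : CompactSpace C' := eC.symm.compactSpace
  have hC'comp : IsCompact C' := isCompact_iff_compactSpace.mpr hC'cs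
  set C : Set X := f '' C' with hCdef
  have hCcomp : IsCompact C := hC'comp.image hfc
  have hCclosed : IsClosed C := hCcomp.isClosed
  have hC'closed : IsClosed C' := hC'comp.isClosed
  -- homeomorphism C' ≃ₜ C
  let g2 : C' ≃ C := Equiv.ofBijective (fun z => ⟨f z, mem_image_of_mem f z.2⟩)
    (by
      constructor
      · intro a b hab
        exact Subtype.ext (hfinj (congrArg Subtype.val hab))
      · rintro ⟨w, z, hz, rfl⟩
        exact ⟨⟨z, hz⟩, rfl⟩)
  have hg2c : Continuous g2 := (hfc.comp continuous_subtype_val).subtype_mk _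
  let hC : C' ≃ₜ C := hg2c.homeoOfEquivCompactToT2
  refine ⟨C, ?_, ⟨hC.symm.trans eC⟩, ?_⟩
  · rw [hCclosed.isNowhereDense_iff]
    by_contra hint
    rw [← ne_eq, ← nonempty_iff_ne_empty] at hint
    obtain ⟨u, huI, huG⟩ := hdenseG.inter_open_nonempty _ isOpen_interior hint
    obtain ⟨x0, rfl⟩ := huG
    have hsubC' : f ⁻¹' interior C ⊆ C' := by
      intro z hz
      obtain ⟨w, hw, hwz⟩ := interior_subset hz
      rwa [← hfinj hwz]
    have hopsub : f ⁻¹' interior C ⊆ interior C' :=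
      interior_maximal hsubC' (isOpen_interior.preimage hfc)
    have hC'int : interior C' = ∅ := (hC'closed.isNowhereDense_iff).mp hC'nwd
    have : x0 ∈ interior C' := hopsub huI
    rw [hC'int] at this
    exact this
  · intro hm
    apply hC'nm
    have heq : ((↑) ⁻¹' (f ⁻¹' Aset) : Set C') = ⇑hC ⁻¹' ((↑) ⁻¹' Aset : Set C) := by
      ext z
      show f z ∈ Aset ↔ ((hC z : C) : X) ∈ Aset
      have : ((hC z : C) : X) = f z := rfl
      rw [this]
    rw [heq]
    exact aux_homeo_meagre_preimage hC hm
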